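/- arXiv:1802.06750 — 5 statements merged into one kernel-verified Lean document; each statement's English description precedes it below -/
import Mathlib

section
/- The ratio f(x) = g(x)/h(x), where g is nonnegative, concave and differentiable, and h is positive, convex and differentiable on a convex set C, is pseudoconcave on C: for all x, y in C, f(y) > f(x) implies ∇f(x)ᵀ(y - x) > 0. -/
/-- Derivative along a line of a differentiable function. -/
lemma line_hasDerivAt {n : ℕ} {p : (Fin n → ℝ) → ℝ} {x v : Fin n → ℝ}
    (hp : DifferentiableAt ℝ p x) :
    HasDerivAt (fun t : ℝ => p (x + t • v)) (fderiv ℝ p x v) 0 := by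
  have hline : HasDerivAt (fun t : ℝ => x + t • v) v 0 := by
    simpa using ((hasDerivAt_id (0 : ℝ)).smul_const v).const_add x
  have hfd : HasFDerivAt p (fderiv ℝ p x) (x + (0 : ℝ) • v) := by
    simpa using hp.hasFDerivAt
  exact hfd.comp_hasDerivAt 0 hline

/-- A convex differentiable function lies above its linearization: directional
derivative bound. -/
lemma conv_fderiv_le {n : ℕ} {p : (Fin n → ℝ) → ℝ} {C : Set (Fin n → ℝ)}
    (hconv : ConvexOn ℝ C p) {x y : Fin n → ℝ} (hx : x ∈ C) (hy : y ∈ C)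
    (hp : DifferentiableAt ℝ p x) :
    fderiv ℝ p x (y - x) ≤ p y - p x := by
  set v := y - x with hv
  set φ : ℝ → ℝ := fun t => p (x + t • v) with hφdef
  have hφ : HasDerivAt φ (fderiv ℝ p x v) 0 := line_hasDerivAt hp
  have htend : Filter.Tendsto (slope φ 0) (nhdsWithin 0 (Set.Ioi (0 : ℝ)))
      (nhds (fderiv ℝ p x v)) := by
    have := hasDerivAt_iff_tendsto_slope.mp hφ
    exact this.mono_left (nhdsWithin_mono _ (fun t ht => Set.mem_compl_singleton_iff.mpr
      (ne_of_gt ht)))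
  refine le_of_tendsto htend ?_
  have hIoo : Set.Ioo (0 : ℝ) 1 ∈ nhdsWithin 0 (Set.Ioi (0 : ℝ)) :=
    Ioo_mem_nhdsGT_of_mem ⟨le_refl _, one_pos⟩
  filter_upwards [hIoo] with t ht
  have ht0 : 0 < t := ht.1
  have ht1 : t < 1 := ht.2
  have hpt : x + t • v = (1 - t) • x + t • y := by
    rw [hv]; rw [smul_sub]; module
  have hineq : p (x + t • v) ≤ (1 - t) * p x + t * p y := by
    rw [hpt]
    exact hconv.2 hx hy (by linarith) (le_of_lt ht0) (by ring)
  have hφ0 : φ 0 = p x := by simp [hφdef]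
  rw [slope_def_field, hφ0, sub_zero, div_le_iff₀ ht0]
  have : φ t ≤ (1 - t) * p x + t * p y := hineq
  nlinarith

/-- A concave differentiable function lies below its linearization. -/
lemma conc_sub_le_fderiv {n : ℕ} {p : (Fin n → ℝ) → ℝ} {C : Set (Fin n → ℝ)}
    (hconc : ConcaveOn ℝ C p) {x y : Fin n → ℝ} (hx : x ∈ C) (hy : y ∈ C)
    (hp : DifferentiableAt ℝ p x) :
    p y - p x ≤ fderiv ℝ p x (y - x) := by
  have hneg : ConvexOn ℝ C (fun z => -p z) := hconc.neg
  have hneg' : DifferentiableAt ℝ (fun z => -p z) x := hp.neg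
  have := conv_fderiv_le hneg hx hy hneg'
  have hfd : fderiv ℝ (fun z => -p z) x = -fderiv ℝ p x := fderiv_neg
  rw [hfd] at this
  simp only [ContinuousLinearMap.neg_apply] at this
  linarith

/-- The ratio f = g/h of a nonnegative concave differentiable function g and a positive
convex differentiable function h is pseudoconcave on a convex set C. -/
theorem stmt_2 {n : ℕ} (g h : (Fin n → ℝ) → ℝ) (U C : Set (Fin n → ℝ))
    (hUopen : IsOpen U) (hCU : C ⊆ U) (hCconv : Convex ℝ C)
    (hg : ∀ x ∈ U, DifferentiableAt ℝ g x) (hh : ∀ x ∈ U, DifferentiableAt ℝ h x)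
    (hgnn : ∀ x ∈ C, 0 ≤ g x) (hgconc : ConcaveOn ℝ C g)
    (hhpos : ∀ x ∈ C, 0 < h x) (hhconv : ConvexOn ℝ C h) :
    ∀ x ∈ C, ∀ y ∈ C, g x / h x < g y / h y →
      0 < fderiv ℝ (fun z => g z / h z) x (y - x) := by
  intro x hx y hy hlt
  have hxU : x ∈ U := hCU hx
  have hgx : DifferentiableAt ℝ g x := hg x hxU
  have hhx : DifferentiableAt ℝ h x := hh x hxU
  have hhxpos : 0 < h x := hhpos x hx
  have hne : h x ≠ 0 := ne_of_gt hhxpos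
  set v := y - x with hv
  set Dg := fderiv ℝ g x v with hDg
  set Dh := fderiv ℝ h x v with hDh
  -- f is differentiable at x
  have hfd : DifferentiableAt ℝ (fun z => g z / h z) x := by
    simp only [div_eq_mul_inv]
    exact hgx.mul (hhx.inv hne)
  -- the value of the directional derivative via the quotient rule along the line
  have h1 : HasDerivAt (fun t : ℝ => (fun z => g z / h z) (x + t • v))
      (fderiv ℝ (fun z => g z / h z) x v) 0 := line_hasDerivAt hfd
  have hgl : HasDerivAt (fun t : ℝ => g (x + t • v)) Dg 0 := line_hasDerivAt hgx
  have hhl : HasDerivAt (fun t : ℝ => h (x + t • v)) Dh 0 := line_hasDerivAt hhx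
  have hne0 : h (x + (0 : ℝ) • v) ≠ 0 := by simpa using hne
  have h2 : HasDerivAt (fun t : ℝ => g (x + t • v) / h (x + t • v))
      ((Dg * h (x + (0:ℝ) • v) - g (x + (0:ℝ) • v) * Dh) / h (x + (0:ℝ) • v) ^ 2) 0 :=
    hgl.div hhl hne0
  have heq : fderiv ℝ (fun z => g z / h z) x v = (Dg * h x - g x * Dh) / h x ^ 2 := by
    have := h1.unique h2
    simpa using this
  rw [heq]
  -- inequalities from convexity/concavity
  have hDgge : g y - g x ≤ Dg := conc_sub_le_fderiv hgconc hx hy hgx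
  have hDhle : Dh ≤ h y - h x := conv_fderiv_le hhconv hx hy hhx
  have hhy : 0 < h y := hhpos y hy
  have hcross : g x * h y < g y * h x := by
    rwa [div_lt_div_iff₀ hhxpos hhy] at hlt
  have hnum : 0 < Dg * h x - g x * Dh := by
    have hgx0 : 0 ≤ g x := hgnn x hx
    nlinarith
  exact div_pos hnum (by positivity)
end

section
/- Let g be concave and differentiable, h positive linear-plus-constant, and C a compact convex nonempty set. Define F(s) = max_{x ∈ C} (g(x) - s·h(x)). Then F is a decreasing convex function of s, and s* is the maximum of g/h over C if and only if F(s*) = 0. (Core correctness property of Dinkelbach's algorithm.) -/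
/-- Core correctness property of Dinkelbach's algorithm: F(s) = max_{x∈C}(g(x) - s h(x))
is a strictly decreasing convex function of s, and s* is the maximum of g/h over C
iff F(s*) = 0. -/
theorem stmt_7 {n : ℕ} (g h : (Fin n → ℝ) → ℝ) (C : Set (Fin n → ℝ))
    (hC : C.Nonempty) (hCcomp : IsCompact C) (hCconv : Convex ℝ C)
    (hgconc : ConcaveOn ℝ C g) (hgdiff : Differentiable ℝ g)
    (hhpos : ∀ x ∈ C, 0 < h x)
    (F : ℝ → ℝ)
    (hF : ∀ s : ℝ, IsGreatest ((fun x => g x - s * h x) '' C) (F s)) :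
    StrictAnti F ∧ ConvexOn ℝ Set.univ F ∧
      ∀ s : ℝ, IsGreatest ((fun x => g x / h x) '' C) s ↔ F s = 0 := by
  refine ⟨?_, ?_, ?_⟩
  · intro s t hst
    obtain ⟨⟨x, hxC, hxv⟩, _⟩ := hF t
    obtain ⟨_, hubs⟩ := hF s
    calc F t = g x - t * h x := hxv.symm
      _ < g x - s * h x := by
          have := hhpos x hxC
          nlinarith
      _ ≤ F s := hubs ⟨x, hxC, rfl⟩
  · refine ⟨convex_univ, ?_⟩
    intro s _ t _ a b ha hb hab
    obtain ⟨⟨x, hxC, hxv⟩, _⟩ := hF (a • s + b • t)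
    obtain ⟨_, hubs⟩ := hF s
    obtain ⟨_, hubt⟩ := hF t
    have h1 : g x - s * h x ≤ F s := hubs ⟨x, hxC, rfl⟩
    have h2 : g x - t * h x ≤ F t := hubt ⟨x, hxC, rfl⟩
    simp only [smul_eq_mul] at *
    have hgxe : (a + b) * g x = g x := by rw [hab, one_mul]
    nlinarith [mul_le_mul_of_nonneg_left h1 ha, mul_le_mul_of_nonneg_left h2 hb, hgxe]
  · intro s
    constructor
    · rintro ⟨⟨x0, hx0C, hx0v⟩, hub⟩
      obtain ⟨⟨x1, hx1C, hx1v⟩, hubF⟩ := hF s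
      have hle : F s ≤ 0 := by
        rw [← hx1v]
        have := hub ⟨x1, hx1C, rfl⟩
        dsimp only at this hx1v ⊢
        have hp := hhpos x1 hx1C
        rw [div_le_iff₀ hp] at this
        linarith
      have hge : 0 ≤ F s := by
        have h0 : g x0 - s * h x0 = 0 := by
          have hp := hhpos x0 hx0C
          dsimp only at hx0v
          field_simp at hx0v
          linarith [hx0v]
        have := hubF ⟨x0, hx0C, h0⟩
        linarith
      linarith
    · intro hFs
      obtain ⟨⟨x1, hx1C, hx1v⟩, hubF⟩ := hF s
      constructor
      · refine ⟨x1, hx1C, ?_⟩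
        have hp := hhpos x1 hx1C
        rw [hFs] at hx1v
        dsimp only at hx1v ⊢
        field_simp
        linarith
      · rintro y ⟨x, hxC, rfl⟩
        have hp := hhpos x hxC
        have := hubF ⟨x, hxC, rfl⟩
        rw [hFs] at this
        dsimp only at this
        rw [div_le_iff₀ hp]
        linarith
end

section
/- In Dinkelbach's iteration s^{τ+1} = g(x(s^τ))/h(x(s^τ)) where x(s) maximizes g(x) - s·h(x) over a compact set C with h > 0 on C, the sequence {s^τ} is monotonically increasing (strictly, unless s^τ already equals the optimal ratio) and bounded above by s* = max_{x∈C} g(x)/h(x). -/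
/-- Dinkelbach's iteration produces a monotonically increasing sequence (strictly,
unless it already equals the optimal ratio) bounded above by s* = max_{x∈C} g/h. -/
theorem stmt_8 {n : ℕ} (g h : (Fin n → ℝ) → ℝ) (C : Set (Fin n → ℝ))
    (hC : C.Nonempty) (hCcomp : IsCompact C)
    (hg : ContinuousOn g C) (hh : ContinuousOn h C)
    (hhpos : ∀ x ∈ C, 0 < h x)
    (sstar : ℝ) (hstar : IsGreatest ((fun x => g x / h x) '' C) sstar)
    (xm : ℝ → (Fin n → ℝ))
    (hxm : ∀ s : ℝ, xm s ∈ C ∧ ∀ y ∈ C, g y - s * h y ≤ g (xm s) - s * h (xm s))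
    (s : ℕ → ℝ) (hs0 : s 0 ≤ sstar)
    (hiter : ∀ τ : ℕ, s (τ + 1) = g (xm (s τ)) / h (xm (s τ))) :
    (∀ τ, s τ ≤ s (τ + 1)) ∧ (∀ τ, s τ ≠ sstar → s τ < s (τ + 1)) ∧
      (∀ τ, s τ ≤ sstar) := by
  obtain ⟨⟨ystar, hyC, hyval⟩, hub⟩ := hstar
  have hbound : ∀ τ, s τ ≤ sstar := by
    intro τ
    induction τ with
    | zero => exact hs0
    | succ τ ih =>
      rw [hiter τ]
      exact hub ⟨xm (s τ), (hxm (s τ)).1, rfl⟩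
  have key : ∀ τ, s τ ≤ s (τ + 1) ∧ (s τ ≠ sstar → s τ < s (τ + 1)) := by
    intro τ
    obtain ⟨hxC, hmax⟩ := hxm (s τ)
    have hxpos := hhpos _ hxC
    have hypos := hhpos _ hyC
    have h1 : g ystar - s τ * h ystar ≤ g (xm (s τ)) - s τ * h (xm (s τ)) := hmax _ hyC
    have hgy : g ystar = sstar * h ystar := by
      field_simp at hyval; linarith
    rw [hiter τ]
    constructor
    · rw [le_div_iff₀ hxpos]
      nlinarith [hbound τ]
    · intro hne
      have hlt : s τ < sstar := lt_of_le_of_ne (hbound τ) hne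
      rw [lt_div_iff₀ hxpos]
      nlinarith
  exact ⟨fun τ => (key τ).1, fun τ => (key τ).2, hbound⟩
end

section
/- Equal-gradient surrogate gives stationarity equivalence: let C ⊆ ℝⁿ be convex, f differentiable, and for each x ∈ C let f̃(·; x) be a differentiable pseudoconcave function on C with ∇f̃(x; x) = ∇f(x). Then x is a stationary point of max_{y∈C} f(y) (i.e., ∇f(x)ᵀ(y - x) ≤ 0 for all y ∈ C) if and only if x is a global maximizer of f̃(·; x) over C. -/
open Filter

/-- First-order condition: if `g` is differentiable and `x` maximizes `g` on convex `C`,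
then directional derivatives along feasible directions are nonpositive. -/
lemma max_fderiv_nonpos {n : ℕ} {C : Set (Fin n → ℝ)} (hCconv : Convex ℝ C)
    {g : (Fin n → ℝ) → ℝ} (hg : Differentiable ℝ g) {x : Fin n → ℝ} (hx : x ∈ C)
    (hmax : ∀ y ∈ C, g y ≤ g x) {y : Fin n → ℝ} (hy : y ∈ C) :
    fderiv ℝ g x (y - x) ≤ 0 := by
  by_contra h
  push_neg at h
  set c : ℝ := fderiv ℝ g x (y - x) with hc
  have hline : HasDerivAt (fun t : ℝ => x + t • (y - x)) (y - x) 0 := by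
    simpa using ((hasDerivAt_id (0:ℝ)).smul_const (y - x)).const_add x
  have hφ : HasDerivAt (fun t : ℝ => g (x + t • (y - x))) c 0 := by
    have := (hg (x + (0:ℝ) • (y - x))).hasFDerivAt.comp_hasDerivAt 0 hline
    simpa [Function.comp_def, map_sub, hc] using this
  have hslope := hasDerivAt_iff_tendsto_slope.mp hφ
  have hpos : ∀ᶠ t in nhdsWithin (0:ℝ) (Set.Ioi 0),
      0 < slope (fun t : ℝ => g (x + t • (y - x))) 0 t :=
    (hslope.eventually (eventually_gt_nhds h)).filter_mono
      (nhdsWithin_mono 0 (fun t ht => ne_of_gt ht))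
  have hlt1 : ∀ᶠ t in nhdsWithin (0:ℝ) (Set.Ioi 0), t < 1 :=
    eventually_nhdsWithin_of_eventually_nhds (eventually_lt_nhds (by norm_num))
  have hgt0 : ∀ᶠ t in nhdsWithin (0:ℝ) (Set.Ioi 0), 0 < t := self_mem_nhdsWithin
  obtain ⟨t, htp, ht1, ht0⟩ := (hpos.and (hlt1.and hgt0)).exists
  have hmemC : x + t • (y - x) ∈ C := by
    have := hCconv hx hy (by linarith : (0:ℝ) ≤ 1 - t) (le_of_lt ht0) (by ring)
    convert this using 1
    module
  have hslope_val : slope (fun t : ℝ => g (x + t • (y - x))) 0 t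
      = (g (x + t • (y - x)) - g x) / t := by
    simp [slope_def_field]
  rw [hslope_val] at htp
  have hgt : 0 < g (x + t • (y - x)) - g x := by
    by_contra hle
    push_neg at hle
    have : (g (x + t • (y - x)) - g x) / t ≤ 0 := div_nonpos_of_nonpos_of_nonneg hle (le_of_lt ht0)
    linarith
  have := hmax _ hmemC
  linarith

/-- Equal-gradient pseudoconcave surrogates give stationarity equivalence: x is a
stationary point of max_{C} f iff x globally maximizes the surrogate f̃(·;x) over C. -/
theorem stmt_12 {n : ℕ} (C : Set (Fin n → ℝ)) (hCconv : Convex ℝ C)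
    (f : (Fin n → ℝ) → ℝ) (hf : Differentiable ℝ f)
    (ft : (Fin n → ℝ) → (Fin n → ℝ) → ℝ)
    (hftd : ∀ x ∈ C, Differentiable ℝ (fun w => ft w x))
    (hpc : ∀ x ∈ C, ∀ y ∈ C, ∀ z ∈ C,
      ft z x < ft y x → 0 < fderiv ℝ (fun w => ft w x) z (y - z))
    (hgrad : ∀ x ∈ C, fderiv ℝ (fun w => ft w x) x = fderiv ℝ f x) :
    ∀ x ∈ C, ((∀ y ∈ C, fderiv ℝ f x (y - x) ≤ 0) ↔ (∀ y ∈ C, ft y x ≤ ft x x)) := by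
  intro x hx
  constructor
  · intro hstat y hy
    by_contra hlt
    push_neg at hlt
    have := hpc x hx y hy x hx hlt
    rw [hgrad x hx] at this
    exact absurd (hstat y hy) (not_le.mpr this)
  · intro hmax y hy
    have := max_fderiv_nonpos hCconv (hftd x hx) hx hmax hy
    rwa [hgrad x hx] at this
end

section
/- Strict monotonicity of Dinkelbach update below the optimum: let g be continuous, h continuous and positive on a nonempty compact set C, s* = max_{x∈C} g(x)/h(x), and for s < s* let x(s) ∈ argmax_{x∈C}(g(x) - s·h(x)). Then g(x(s)) - s·h(x(s)) > 0 and the update s' = g(x(s))/h(x(s)) satisfies s < s' ≤ s*. -/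
/-- Strict monotonicity of the Dinkelbach update below the optimum: if s < s*, the
maximizer x(s) of g - s·h has positive parametric value and the updated ratio lies
strictly above s and at most s*. -/
theorem stmt_19 {n : ℕ} (g h : (Fin n → ℝ) → ℝ) (C : Set (Fin n → ℝ))
    (hC : C.Nonempty) (hCcomp : IsCompact C)
    (hg : Continuous g) (hh : Continuous h)
    (hhpos : ∀ x ∈ C, 0 < h x)
    (sstar : ℝ) (hstar : IsGreatest ((fun x => g x / h x) '' C) sstar)
    (s : ℝ) (hs : s < sstar)
    (xs : Fin n → ℝ) (hxs : xs ∈ C)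
    (hmax : ∀ y ∈ C, g y - s * h y ≤ g xs - s * h xs) :
    0 < g xs - s * h xs ∧ s < g xs / h xs ∧ g xs / h xs ≤ sstar := by
  obtain ⟨x0, hx0C, hx0⟩ := hstar.1
  have hx0h := hhpos x0 hx0C
  have h1 : 0 < g x0 - s * h x0 := by
    have : g x0 = sstar * h x0 := by
      field_simp at hx0
      linarith [hx0]
    rw [this]
    nlinarith
  have hpos : 0 < g xs - s * h xs := lt_of_lt_of_le h1 (hmax x0 hx0C)
  have hxsh := hhpos xs hxs
  refine ⟨hpos, ?_, hstar.2 ⟨xs, hxs, rfl⟩⟩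
  rw [lt_div_iff₀ hxsh]
  linarith
end
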